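/- Let r > 0, p₀ ∈ ℕ, M > 0, and let (g_n) be a sequence of holomorphic functions on the punctured disk D* = {ζ : 0 < |ζ| < r} with |g_n(ζ)| ≤ M/|ζ|^{p₀} for all n and all ζ ∈ D*. Suppose that for every q ∈ ℕ there exists n₀ such that for all n ≥ n₀ there exist C_n, η_n > 0 with |g_n(ξ)| ≤ C_n ξ^q for all real ξ ∈ (0, η_n). Then for every q ∈ ℕ there exists n₀ such that for all n ≥ n₀ and all ζ with 0 < |ζ| ≤ r/2: |g_n(ζ)| ≤ 2M |ζ/r|^q / |ζ|^{p₀}. In particular g_n(ζ) → 0 for every fixed ζ ∈ D* with |ζ| ≤ r/2. -/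

import Mathlib

open Complex Filter Topology Metric Set

lemma aux13 (r M : ℝ) (hr : 0 < r) (hM : 0 < M) (q : ℕ) (F : ℂ → ℂ)
    (hF : DifferentiableOn ℂ F (ball (0:ℂ) r \ {0}))
    (hFb : ∀ ζ : ℂ, ζ ∈ ball (0:ℂ) r \ {0} → ‖F ζ‖ ≤ M)
    (C η : ℝ) (hη : 0 < η)
    (hd : ∀ ξ : ℝ, 0 < ξ → ξ < η → ‖F ξ‖ ≤ C * ξ ^ q) :
    ∀ ζ : ℂ, ζ ∈ ball (0:ℂ) r \ {0} →
      ‖F ζ‖ ≤ M * (‖ζ‖ / r) ^ q := by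
  have hmem : ∀ ξ : ℝ, 0 < ξ → ξ < r → (ξ:ℂ) ∈ ball (0:ℂ) r \ {0} := by
    intro ξ h1 h2
    constructor
    · simp [Metric.mem_ball, Complex.dist_eq, Complex.norm_real, abs_of_pos h1, h2]
    · simp [Complex.ofReal_ne_zero, h1.ne']
  -- Main induction: divide out zeros
  have key : ∀ i, i ≤ q → ∃ H : ℂ → ℂ, DifferentiableOn ℂ H (ball (0:ℂ) r) ∧
      ∀ ζ : ℂ, ζ ∈ ball (0:ℂ) r → ζ ≠ 0 → F ζ = ζ ^ i * H ζ := by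
    intro i
    induction i with
    | zero =>
      intro _
      refine ⟨Function.update F 0 (limUnder (𝓝[≠] 0) F), ?_, ?_⟩
      · apply Complex.differentiableOn_update_limUnder_of_bddAbove
          (ball_mem_nhds (0:ℂ) hr) hF
        exact ⟨M, by rintro y ⟨ζ, hζ, rfl⟩; exact hFb ζ hζ⟩
      · intro ζ _ hne
        simp [Function.update_of_ne hne]
    | succ i ih =>
      intro hi
      obtain ⟨H, hH, hHe⟩ := ih (Nat.le_of_succ_le hi)
      have hball : ball (0:ℂ) r ∈ 𝓝 (0:ℂ) := ball_mem_nhds _ hr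
      have hC0 : 0 ≤ C := by
        have := hd (min η 1 / 2) (by positivity) (by
          calc min η 1 / 2 < min η 1 := half_lt_self (by positivity)
          _ ≤ η := min_le_left _ _)
        nlinarith [norm_nonneg (F ((min η 1 / 2 : ℝ) : ℂ)),
          pow_pos (show (0:ℝ) < min η 1 / 2 by positivity) q]
      -- H 0 = 0
      have h0 : H 0 = 0 := by
        have hc : ContinuousAt H 0 := (hH.continuousOn).continuousAt hball
        have t1 : Tendsto (fun ξ : ℝ => H (ξ:ℂ)) (𝓝[>] (0:ℝ)) (𝓝 (H 0)) := by
          have : Tendsto (fun ξ : ℝ => (ξ:ℂ)) (𝓝[>] (0:ℝ)) (𝓝 (0:ℂ)) := by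
            have := (Complex.continuous_ofReal.tendsto 0).mono_left
              (nhdsWithin_le_nhds (s := Set.Ioi (0:ℝ)))
            simpa using this
          exact hc.tendsto.comp this
        have t2 : Tendsto (fun ξ : ℝ => H (ξ:ℂ)) (𝓝[>] (0:ℝ)) (𝓝 0) := by
          apply squeeze_zero_norm' (a := fun ξ : ℝ => C * ξ)
          · have hδ : (0:ℝ) < min η (min r 1) := by positivity
            filter_upwards [Ioo_mem_nhdsGT_of_mem
              (Set.mem_Ico.2 ⟨le_refl (0:ℝ), hδ⟩)] with ξ hξ
            obtain ⟨hξ0, hξδ⟩ := hξ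
            have hξη : ξ < η := lt_of_lt_of_le hξδ (min_le_left _ _)
            have hξr : ξ < r := lt_of_lt_of_le hξδ ((min_le_right _ _).trans (min_le_left _ _))
            have hξ1 : ξ ≤ 1 := le_of_lt (lt_of_lt_of_le hξδ
              ((min_le_right _ _).trans (min_le_right _ _)))
            have hm := hmem ξ hξ0 hξr
            have heq := hHe ξ hm.1 (by simpa using hm.2)
            have habs : ‖F ξ‖ = ξ ^ i * ‖H ξ‖ := by
              rw [heq, norm_mul, norm_pow, Complex.norm_real, Real.norm_eq_abs, abs_of_pos hξ0]
            have hFd := hd ξ hξ0 hξη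
            rw [habs] at hFd
            have hpow : ξ ^ q ≤ ξ ^ i * ξ := by
              have : ξ ^ q = ξ ^ i * ξ ^ (q - i) := by
                rw [← pow_add]; congr 1; omega
              rw [this]
              have : ξ ^ (q - i) ≤ ξ ^ 1 := by
                apply pow_le_pow_of_le_one hξ0.le hξ1; omega
              nlinarith [pow_pos hξ0 i, pow_nonneg hξ0.le i]
            have hip : (0:ℝ) < ξ ^ i := pow_pos hξ0 i
            have : ξ ^ i * ‖H ξ‖ ≤ C * (ξ ^ i * ξ) := by
              calc ξ ^ i * ‖H ξ‖ ≤ C * ξ ^ q := hFd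
              _ ≤ C * (ξ ^ i * ξ) := by nlinarith
            nlinarith
          · have : Tendsto (fun ξ : ℝ => C * ξ) (𝓝 (0:ℝ)) (𝓝 (C * 0)) :=
              (tendsto_id.const_mul C)
            simpa using this.mono_left nhdsWithin_le_nhds
        exact tendsto_nhds_unique t1 t2
      refine ⟨dslope H 0, ?_, ?_⟩
      · intro ζ hζ
        rcases eq_or_ne ζ 0 with rfl | hne
        · obtain ⟨p, hp⟩ := hH.analyticAt hball
          exact (hp.has_fpower_series_dslope_fslope.analyticAt.differentiableAt).differentiableWithinAt
        · exact (differentiableWithinAt_dslope_of_ne hne).2 (hH ζ hζ)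
      · intro ζ hζ hne
        rw [hHe ζ hζ hne, dslope_of_ne _ hne, slope_def_field, h0]
        field_simp
        ring
  obtain ⟨H, hH, hHe⟩ := key q le_rfl
  intro ζ ⟨hζr, hζ0⟩
  have hζ0' : ζ ≠ 0 := by simpa using hζ0
  have habs0 : 0 < ‖ζ‖ := by simpa [norm_pos_iff] using hζ0'
  have hζr' : ‖ζ‖ < r := by
    simpa [Metric.mem_ball, Complex.dist_eq] using hζr
  -- max modulus bound on H
  have step : ∀ s : ℝ, ‖ζ‖ ≤ s → s < r → ‖H ζ‖ ≤ M / s ^ q := by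
    intro s hs1 hs2
    have hs0 : 0 < s := lt_of_lt_of_le habs0 hs1
    have hsub : closedBall (0:ℂ) s ⊆ ball (0:ℂ) r := closedBall_subset_ball hs2
    have hd1 : DiffContOnCl ℂ H (ball (0:ℂ) s) := by
      apply DifferentiableOn.diffContOnCl
      rw [closure_ball (0:ℂ) hs0.ne']
      exact hH.mono hsub
    have := Complex.norm_le_of_forall_mem_frontier_norm_le
      (isBounded_ball (x := (0:ℂ)) (r := s)) hd1 (C := M / s ^ q) ?_ (z := ζ) ?_
    · simpa using this
    · intro w hw
      rw [frontier_ball (0:ℂ) hs0.ne'] at hw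
      have hwabs : ‖w‖ = s := by
        simpa [Complex.dist_eq] using hw
      have hw0 : w ≠ 0 := by
        intro h; rw [h] at hwabs; simp at hwabs; exact hs0.ne' hwabs.symm
      have hwb : w ∈ ball (0:ℂ) r \ {0} := by
        constructor
        · simp [Metric.mem_ball, Complex.dist_eq, hwabs, hs2]
        · simpa using hw0
      have heq := hHe w hwb.1 hw0
      have : ‖F w‖ = s ^ q * ‖H w‖ := by
        rw [heq, norm_mul, norm_pow, hwabs]
      have hb := hFb w hwb
      rw [this] at hb
      rw [le_div_iff₀ (by positivity)]
      linarith [hb]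
    · rw [closure_ball (0:ℂ) hs0.ne']
      simpa [Metric.mem_closedBall, Complex.dist_eq] using hs1
  have hlim : ‖H ζ‖ ≤ M / r ^ q := by
    have t : Tendsto (fun s : ℝ => M / s ^ q) (𝓝[<] r) (𝓝 (M / r ^ q)) := by
      apply Tendsto.mono_left _ nhdsWithin_le_nhds
      exact (tendsto_const_nhds.div ((continuous_pow q).tendsto r) (by positivity))
    apply ge_of_tendsto t
    filter_upwards [Ioo_mem_nhdsLT_of_mem (Set.mem_Ioc.2 ⟨hζr', le_refl r⟩)] with s hs
    exact step s hs.1.le hs.2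
  have heq := hHe ζ hζr hζ0'
  calc ‖F ζ‖ = ‖ζ‖ ^ q * ‖H ζ‖ := by
        rw [heq, norm_mul, norm_pow]
  _ ≤ ‖ζ‖ ^ q * (M / r ^ q) := by
        apply mul_le_mul_of_nonneg_left hlim (by positivity)
  _ = M * (‖ζ‖ / r) ^ q := by
        rw [div_pow]; field_simp

theorem stmt13 (r : ℝ) (hr : 0 < r) (p₀ : ℕ) (M : ℝ) (hM : 0 < M)
    (g : ℕ → ℂ → ℂ)
    (hol : ∀ n, DifferentiableOn ℂ (g n) {ζ : ℂ | 0 < ‖ζ‖ ∧ ‖ζ‖ < r})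
    (hbound : ∀ n, ∀ ζ : ℂ, 0 < ‖ζ‖ → ‖ζ‖ < r →
      ‖g n ζ‖ ≤ M / ‖ζ‖ ^ p₀)
    (hdecay : ∀ q : ℕ, ∃ n₀ : ℕ, ∀ n ≥ n₀, ∃ C > 0, ∃ η > 0,
      ∀ ξ : ℝ, 0 < ξ → ξ < η → ‖g n (ξ : ℂ)‖ ≤ C * ξ ^ q) :
    (∀ q : ℕ, ∃ n₀ : ℕ, ∀ n ≥ n₀, ∀ ζ : ℂ, 0 < ‖ζ‖ → ‖ζ‖ ≤ r / 2 →
      ‖g n ζ‖ ≤ 2 * M * (‖ζ‖ / r) ^ q / ‖ζ‖ ^ p₀) ∧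
    (∀ ζ : ℂ, 0 < ‖ζ‖ → ‖ζ‖ ≤ r / 2 →
      Tendsto (fun n => g n ζ) atTop (nhds 0)) := by
  have hset : {ζ : ℂ | 0 < ‖ζ‖ ∧ ‖ζ‖ < r} = ball (0:ℂ) r \ {0} := by
    ext ζ
    simp only [Set.mem_setOf_eq, Set.mem_diff, Metric.mem_ball, Complex.dist_eq, sub_zero,
      Set.mem_singleton_iff]
    constructor
    · rintro ⟨h1, h2⟩; exact ⟨h2, by intro h; rw [h] at h1; simp at h1⟩
    · rintro ⟨h1, h2⟩; exact ⟨by simpa [norm_pos_iff] using h2, h1⟩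
  have part1 : ∀ q : ℕ, ∃ n₀ : ℕ, ∀ n ≥ n₀, ∀ ζ : ℂ, 0 < ‖ζ‖ →
      ‖ζ‖ ≤ r / 2 →
      ‖g n ζ‖ ≤ 2 * M * (‖ζ‖ / r) ^ q / (‖ζ‖) ^ p₀ := by
    intro q
    obtain ⟨n₀, hn₀⟩ := hdecay q
    refine ⟨n₀, fun n hn ζ hζ0 hζr2 => ?_⟩
    obtain ⟨C, hC, η, hη, hCd⟩ := hn₀ n hn
    set F : ℂ → ℂ := fun w => w ^ p₀ * g n w with hFdef
    have hF : DifferentiableOn ℂ F (ball (0:ℂ) r \ {0}) := by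
      have := hol n; rw [hset] at this
      exact ((differentiable_pow p₀).differentiableOn).mul this
    have hFb : ∀ w : ℂ, w ∈ ball (0:ℂ) r \ {0} → ‖F w‖ ≤ M := by
      rintro w ⟨hw1, hw2⟩
      have hw2' : w ≠ 0 := by simpa using hw2
      have hwp : 0 < ‖w‖ := by simpa [norm_pos_iff] using hw2'
      have hwr : ‖w‖ < r := by
        simpa [Metric.mem_ball, Complex.dist_eq] using hw1
      have := hbound n w hwp hwr
      calc ‖F w‖ = ‖w‖ ^ p₀ * ‖g n w‖ := by
            simp [hFdef, norm_mul, norm_pow]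
      _ ≤ ‖w‖ ^ p₀ * (M / ‖w‖ ^ p₀) := by
            exact mul_le_mul_of_nonneg_left this (by positivity)
      _ = M := by field_simp
    have hFd : ∀ ξ : ℝ, 0 < ξ → ξ < min η 1 → ‖F ξ‖ ≤ C * ξ ^ q := by
      intro ξ h1 h2
      have hξη : ξ < η := lt_of_lt_of_le h2 (min_le_left _ _)
      have hξ1 : ξ ≤ 1 := le_of_lt (lt_of_lt_of_le h2 (min_le_right _ _))
      have hpow : ξ ^ p₀ ≤ 1 := pow_le_one₀ h1.le hξ1
      calc ‖F ξ‖ = ξ ^ p₀ * ‖g n ξ‖ := by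
            simp [hFdef, norm_mul, norm_pow, Complex.norm_real, abs_of_pos h1]
      _ ≤ 1 * (C * ξ ^ q) := by
            apply mul_le_mul hpow (hCd ξ h1 hξη) (norm_nonneg _)
            norm_num
      _ = C * ξ ^ q := one_mul _
    have hζr : ‖ζ‖ < r := lt_of_le_of_lt hζr2 (by linarith)
    have hζmem : ζ ∈ ball (0:ℂ) r \ {0} := by
      rw [← hset]; exact ⟨hζ0, hζr⟩
    have := aux13 r M hr hM q F hF hFb C (min η 1) (by positivity) hFd ζ hζmem
    have h2 : ‖g n ζ‖ = ‖F ζ‖ / ‖ζ‖ ^ p₀ := by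
      rw [hFdef]; simp only [norm_mul, norm_pow]
      field_simp
    rw [h2]
    have hM2 : ‖F ζ‖ ≤ 2 * M * (‖ζ‖ / r) ^ q := by
      nlinarith [pow_nonneg (div_nonneg (norm_nonneg ζ) hr.le) q]
    exact (div_le_div_iff_of_pos_right (by positivity)).2 hM2
  refine ⟨part1, ?_⟩
  intro ζ hζ0 hζr2
  rw [NormedAddCommGroup.tendsto_nhds_zero]
  intro ε hε
  have hb : (0:ℝ) < 2 * M / ‖ζ‖ ^ p₀ := by positivity
  have htend : Tendsto (fun q : ℕ => (2 * M / ‖ζ‖ ^ p₀) * (1/2) ^ q) atTop (𝓝 0) := by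
    have := tendsto_pow_atTop_nhds_zero_of_lt_one (by norm_num : (0:ℝ) ≤ 1/2)
      (by norm_num : (1/2:ℝ) < 1)
    simpa using this.const_mul (2 * M / ‖ζ‖ ^ p₀)
  obtain ⟨q, hq⟩ := (htend.eventually (gt_mem_nhds hε)).exists
  obtain ⟨n₀, hn₀⟩ := part1 q
  filter_upwards [eventually_ge_atTop n₀] with n hn
  have h1 := hn₀ n hn ζ hζ0 hζr2
  have hhalf : ‖ζ‖ / r ≤ 1/2 := by
    rw [div_le_div_iff₀ (by positivity) (by norm_num)]
    linarith
  have h2 : 2 * M * (‖ζ‖ / r) ^ q / ‖ζ‖ ^ p₀ ≤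
      (2 * M / ‖ζ‖ ^ p₀) * (1/2) ^ q := by
    have hp : (‖ζ‖ / r) ^ q ≤ (1/2:ℝ) ^ q :=
      pow_le_pow_left₀ (by positivity) hhalf q
    have heq : 2 * M * (‖ζ‖ / r) ^ q / ‖ζ‖ ^ p₀ =
        (2 * M / ‖ζ‖ ^ p₀) * (‖ζ‖ / r) ^ q := by
      field_simp
    rw [heq]
    exact mul_le_mul_of_nonneg_left hp hb.le
  calc ‖g n ζ‖ = ‖g n ζ‖ := rfl
  _ ≤ 2 * M * (‖ζ‖ / r) ^ q / ‖ζ‖ ^ p₀ := h1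
  _ ≤ (2 * M / ‖ζ‖ ^ p₀) * (1/2) ^ q := h2
  _ < ε := hq
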